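/- Let $k \ge 2$. For each $i \in \{1, \dots, k\}$ let $G_i$ be an abelian group, $w_i : G_i \to \mathbb{Z}$ a surjective group homomorphism whose kernel is finite of cardinality $r_i$, and $Q_i \in G_i$ an element with $q_i := w_i(Q_i) > 0$. Set $\mathcal{Q}_i = \prod_{j \ne i} q_j$ and $h = \gcd(\mathcal{Q}_1, \dots, \mathcal{Q}_k)$. In the direct sum $\bigoplus_{i=1}^k G_i$, let $A_j = \iota_1(Q_1) - \iota_j(Q_j)$ for $j = 2, \dots, k$, where $\iota_i$ is the canonical inclusion of the $i$-th summand. Then: (1) the elements $A_2, \dots, A_k$ are a free basis of the subgroup they generate, which is free abelian of rank $k-1$; and (2) the torsion subgroup of the quotient group $G = (\bigoplus_{i=1}^k G_i) / \langle A_2, \dots, A_k \rangle$ is finite of cardinality $r_1 \cdots r_k \cdot h$. -/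

import Mathlib

open Finset AddSubgroup Function

/-- Bezout for a finset gcd over ℤ. -/
private lemma finset_gcd_bezout {ι : Type} [DecidableEq ι] (s : Finset ι) (f : ι → ℤ) :
    ∃ g : ι → ℤ, ∑ i ∈ s, g i * f i = s.gcd f := by
  induction s using Finset.induction_on with
  | empty => exact ⟨0, by simp⟩
  | @insert a s ha ih =>
    obtain ⟨g, hg⟩ := ih
    refine ⟨fun i => if i = a then Int.gcdA (f a) (s.gcd f)
      else Int.gcdB (f a) (s.gcd f) * g i, ?_⟩
    rw [Finset.sum_insert ha, Finset.gcd_insert, ← Int.coe_gcd, Int.gcd_eq_gcd_ab]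
    beta_reduce
    rw [Finset.sum_congr rfl (fun i hi => by
      rw [if_neg (by rintro rfl; exact ha hi)])]
    have : ∑ i ∈ s, Int.gcdB (f a) (s.gcd f) * g i * f i
        = Int.gcdB (f a) (s.gcd f) * ∑ i ∈ s, g i * f i := by
      rw [Finset.mul_sum]; exact Finset.sum_congr rfl fun i _ => by ring
    rw [this, hg, if_pos rfl]; ring

/-- The product of the characters, as a map to `Fin k → ℤ`. -/
private def Wmap {k : ℕ} (G : Fin k → Type) [∀ i, AddCommGroup (G i)]
    (w : (i : Fin k) → G i →+ ℤ) : ((i : Fin k) → G i) →+ (Fin k → ℤ) where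
  toFun x i := w i (x i)
  map_zero' := by funext i; simp
  map_add' x y := by funext i; simp

@[simp] private lemma Wmap_apply {k : ℕ} (G : Fin k → Type) [∀ i, AddCommGroup (G i)]
    (w : (i : Fin k) → G i →+ ℤ) (x : (i : Fin k) → G i) (i : Fin k) :
    Wmap G w x i = w i (x i) := rfl

/-- An integer linear functional on `Fin k → ℤ`. -/
private def cmap {k : ℕ} (c : Fin k → ℤ) : (Fin k → ℤ) →+ ℤ where
  toFun v := ∑ i, c i * v i
  map_zero' := by simp
  map_add' a b := by simp [mul_add, Finset.sum_add_distrib]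

@[simp] private lemma cmap_apply {k : ℕ} (c : Fin k → ℤ) (v : Fin k → ℤ) :
    cmap c v = ∑ i, c i * v i := rfl

private lemma cmap_single {k : ℕ} (c : Fin k → ℤ) (m : Fin k) (t : ℤ) :
    cmap c (Pi.single m t) = c m * t := by
  classical
  rw [cmap_apply]
  rw [Finset.sum_eq_single m (fun i _ hi => by rw [Pi.single_eq_of_ne hi, mul_zero]) (by simp)]
  rw [Pi.single_eq_same]

private lemma cmap_surjective {k : ℕ} {c : Fin k → ℤ}
    (hc : Finset.gcd Finset.univ c = 1) : Function.Surjective (cmap c) := by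
  intro t
  obtain ⟨g, hg⟩ := finset_gcd_bezout Finset.univ c
  refine ⟨fun i => g i * t, ?_⟩
  rw [cmap_apply]
  have : ∑ i, c i * (g i * t) = (∑ i, g i * c i) * t := by
    rw [Finset.sum_mul]; exact Finset.sum_congr rfl fun i _ => by ring
  rw [this, hg, hc, one_mul]

/-- Abstract group-theoretic content of Theorem 6.5 of Neumann–Wahl, "The End Curve
Theorem for normal complex surface singularities".  Given abelian groups
`G 0, …, G (k-1)` (`k ≥ 2`) with surjections `w i : G i → ℤ` having finite kernels
of cardinality `r i`, and elements `Q i ∈ G i` of positive weight `q i = w i (Q i)`,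
set `Qp i = ∏_{j ≠ i} q j` and `h = gcd (Qp 0, …, Qp (k-1))`.  In `⊕ G i`, the
elements `A j = ι 0 (Q 0) - ι j (Q j)` (`j ≠ 0`) are a free (ℤ-linearly
independent) basis of the subgroup `K` they generate (so `K` is free abelian of
rank `k - 1`), and the torsion subgroup of `(⊕ G i) / K` is finite of cardinality
`r 0 ⋯ r (k-1) · h`. -/
theorem torsion_of_amalgamated_character_group (k : ℕ) (hk : 2 ≤ k)
    (i0 : Fin k) (hi0 : (i0 : ℕ) = 0)
    (G : Fin k → Type) [∀ i, AddCommGroup (G i)]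
    (w : (i : Fin k) → G i →+ ℤ) (hw : ∀ i, Function.Surjective (w i))
    (hfin : ∀ i, Finite ((w i).ker))
    (r : Fin k → ℕ) (hr : ∀ i, r i = Nat.card ((w i).ker))
    (Q : (i : Fin k) → G i)
    (q : Fin k → ℤ) (hq : ∀ i, q i = w i (Q i)) (hqpos : ∀ i, 0 < q i)
    (Qp : Fin k → ℤ) (hQp : ∀ i, Qp i = ∏ j ∈ Finset.univ.erase i, q j)
    (h : ℤ) (hh : h = Finset.gcd Finset.univ Qp)
    (A : {j : Fin k // j ≠ i0} → ((i : Fin k) → G i))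
    (hA : ∀ j, A j = Pi.single i0 (Q i0) - Pi.single j.1 (Q j.1))
    (K : AddSubgroup ((i : Fin k) → G i))
    (hK : K = AddSubgroup.closure (Set.range A)) :
    LinearIndependent ℤ A ∧
    Finite (AddCommGroup.torsion (((i : Fin k) → G i) ⧸ K)) ∧
    (Nat.card (AddCommGroup.torsion (((i : Fin k) → G i) ⧸ K)) : ℤ) =
      (∏ i, (r i : ℤ)) * h := by
  classical
  -- ### Arithmetic preliminaries
  have hQppos : ∀ i, 0 < Qp i := fun i => by
    rw [hQp]; exact Finset.prod_pos fun j _ => hqpos j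
  have hhdvd : ∀ i, h ∣ Qp i := fun i => by
    rw [hh]; exact Finset.gcd_dvd (Finset.mem_univ i)
  have hhnonneg : 0 ≤ h := by
    have h1 : normalize h = h := by rw [hh]; exact Finset.normalize_gcd
    rw [← Int.abs_eq_normalize] at h1
    rw [← h1]; exact abs_nonneg h
  have hhne : h ≠ 0 := by
    intro h0
    have := hhdvd i0
    rw [h0] at this
    exact (hQppos i0).ne' (zero_dvd_iff.mp this)
  have hhpos : 0 < h := lt_of_le_of_ne hhnonneg (Ne.symm hhne)
  set c : Fin k → ℤ := fun i => Qp i / h with hcdef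
  have hc : ∀ i, h * c i = Qp i := fun i => Int.mul_ediv_cancel' (hhdvd i)
  have hcpos : ∀ i, 0 < c i := fun i => by
    have h1 := hc i; have h2 := hQppos i; nlinarith [hhpos]
  have hgcdc : Finset.gcd Finset.univ c = 1 := by
    have h1 := Finset.gcd_div_eq_one (s := Finset.univ) (f := Qp)
      (Finset.mem_univ i0) (hQppos i0).ne'
    rw [hcdef, hh]; exact h1
  have hprodq : ∀ i, Qp i * q i = ∏ j, q j := fun i => by
    rw [hQp]; exact Finset.prod_erase_mul _ _ (Finset.mem_univ i)
  have hcq : ∀ i, c i * q i = c i0 * q i0 := fun i => by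
    have e : h * (c i * q i) = h * (c i0 * q i0) := by
      rw [← mul_assoc, ← mul_assoc, hc, hc, hprodq, hprodq]
    exact mul_left_cancel₀ hhne e
  -- ### The maps
  set W : ((i : Fin k) → G i) →+ (Fin k → ℤ) := Wmap G w with hWdef
  have hWsurj : Function.Surjective W := by
    intro x
    refine ⟨fun i => Classical.choose (hw i (x i)), funext fun i => ?_⟩
    exact Classical.choose_spec (hw i (x i))
  set u : ((i : Fin k) → G i) →+ ℤ := (cmap c).comp W with hudef
  have hucomp : ∀ x, u x = cmap c (W x) := fun x => rfl
  set v : {j : Fin k // j ≠ i0} → (Fin k → ℤ) :=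
    fun j => Pi.single i0 (q i0) - Pi.single j.1 (q j.1) with hvdef
  have hWA : ∀ j, W (A j) = v j := by
    intro j
    funext i
    have key : ∀ (m : Fin k) (g : G m), w i (Pi.single m g i) = (Pi.single m (w m g) : Fin k → ℤ) i := by
      intro m g
      rcases eq_or_ne i m with rfl | him
      · rw [Pi.single_eq_same, Pi.single_eq_same]
      · rw [Pi.single_eq_of_ne him, Pi.single_eq_of_ne him, map_zero]
    rw [hWdef]
    simp only [Wmap_apply, hvdef]
    rw [hA]
    rw [Pi.sub_apply, map_sub, key, key, Pi.sub_apply, ← hq i0, ← hq j.1]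
  -- ### The subgroups
  set T : AddSubgroup ((i : Fin k) → G i) := W.ker with hTdef
  set P : AddSubgroup ((i : Fin k) → G i) := u.ker with hPdef
  set L : AddSubgroup (Fin k → ℤ) := AddSubgroup.closure (Set.range v) with hLdef
  set satL : AddSubgroup (Fin k → ℤ) := (cmap c).ker with hsatdef
  set E0 : AddSubgroup (Fin k → ℤ) := AddSubgroup.zmultiples (Pi.single i0 (1 : ℤ)) with hE0def
  have hcmapv : ∀ j, cmap c (v j) = 0 := by
    intro j
    simp only [hvdef]
    rw [map_sub, cmap_single, cmap_single, hcq j.1, sub_self]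
  have hLle : L ≤ satL := by
    rw [hLdef]
    refine (AddSubgroup.closure_le _).mpr ?_
    rintro x ⟨j, rfl⟩
    exact AddMonoidHom.mem_ker.mpr (hcmapv j)
  have hKP : K ≤ P := by
    rw [hK, hPdef]
    refine (AddSubgroup.closure_le _).mpr ?_
    rintro x ⟨j, rfl⟩
    refine AddMonoidHom.mem_ker.mpr ?_
    rw [hucomp, hWA j]
    exact hcmapv j
  have hTP : T ≤ P := by
    intro x hx
    have hx0 : W x = 0 := AddMonoidHom.mem_ker.mp hx
    exact AddMonoidHom.mem_ker.mpr (by rw [hucomp, hx0, map_zero])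
  -- ### Coefficient extraction
  have hmemK : ∀ x ∈ K, ∃ cf : {j : Fin k // j ≠ i0} → ℤ, ∑ j, cf j • A j = x := by
    intro x hx
    rw [hK, ← Submodule.span_int_eq_addSubgroupClosure, Submodule.mem_toAddSubgroup] at hx
    exact (Submodule.mem_span_range_iff_exists_fun ℤ).mp hx
  have hmemL : ∀ x ∈ L, ∃ cf : {j : Fin k // j ≠ i0} → ℤ, ∑ j, cf j • v j = x := by
    intro x hx
    rw [hLdef, ← Submodule.span_int_eq_addSubgroupClosure, Submodule.mem_toAddSubgroup] at hx
    exact (Submodule.mem_span_range_iff_exists_fun ℤ).mp hx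
  -- ### Evaluation of combinations
  have heval : ∀ (cf : {j : Fin k // j ≠ i0} → ℤ) (m : Fin k) (hm : m ≠ i0),
      (∑ j, cf j • v j) m = -(cf ⟨m, hm⟩ * q m) := by
    intro cf m hm
    rw [Finset.sum_apply]
    rw [Finset.sum_eq_single (⟨m, hm⟩ : {j : Fin k // j ≠ i0}) ?_ (by simp)]
    · simp only [hvdef, Pi.smul_apply, Pi.sub_apply]
      rw [Pi.single_eq_of_ne hm, Pi.single_eq_same]
      simp [smul_eq_mul]
    · intro j _ hj
      have h1 : m ≠ j.1 := fun e => hj (Subtype.ext e.symm)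
      simp only [hvdef, Pi.smul_apply, Pi.sub_apply]
      rw [Pi.single_eq_of_ne hm, Pi.single_eq_of_ne h1]
      simp
  have hcoeff : ∀ cf : {j : Fin k // j ≠ i0} → ℤ, (∑ j, cf j • v j) = 0 → ∀ j, cf j = 0 := by
    intro cf h0 j
    have h1 := congrFun h0 j.1
    rw [heval cf j.1 j.2, Pi.zero_apply, neg_eq_zero] at h1
    rcases mul_eq_zero.mp h1 with h2 | h2
    · exact h2
    · exact absurd h2 (hqpos j.1).ne'
  -- ### Linear independence
  have hlin : LinearIndependent ℤ A := by
    apply LinearIndependent.of_comp W.toIntLinearMap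
    rw [Fintype.linearIndependent_iff]
    intro g hg j
    refine hcoeff g ?_ j
    calc ∑ j', g j' • v j' = ∑ j', g j' • (⇑W.toIntLinearMap ∘ A) j' := by
          refine Finset.sum_congr rfl fun j' _ => ?_
          rw [Function.comp_apply]
          show g j' • v j' = g j' • W (A j')
          rw [hWA j']
      _ = 0 := hg
  have hWsum : ∀ cf : {j : Fin k // j ≠ i0} → ℤ,
      W (∑ j, cf j • A j) = ∑ j, cf j • v j := by
    intro cf
    show W.toIntLinearMap (∑ j, cf j • A j) = _
    rw [map_sum]
    refine Finset.sum_congr rfl fun j _ => ?_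
    rw [map_smul]
    show cf j • W (A j) = cf j • v j
    rw [hWA j]
  -- ### K ∩ T = ⊥
  have hKTbot : K ⊓ T = ⊥ := by
    rw [eq_bot_iff]
    rintro x ⟨hxK, hxT⟩
    obtain ⟨cf, rfl⟩ := hmemK x hxK
    have h0 : ∑ j, cf j • v j = 0 := by
      rw [← hWsum]; exact AddMonoidHom.mem_ker.mp hxT
    have hz := hcoeff cf h0
    rw [AddSubgroup.mem_bot]
    exact Finset.sum_eq_zero fun j _ => by rw [hz j, zero_smul]
  -- ### comap W L = T ⊔ K
  have hWK : AddSubgroup.comap W L = T ⊔ K := by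
    apply le_antisymm
    · intro x hx
      rw [AddSubgroup.mem_comap] at hx
      obtain ⟨cf, hcf⟩ := hmemL (W x) hx
      have hκK : (∑ j, cf j • A j) ∈ K := by
        rw [hK]
        exact AddSubgroup.sum_mem _ fun j _ =>
          AddSubgroup.zsmul_mem _ (AddSubgroup.subset_closure (Set.mem_range_self j)) _
      have hxT : x - ∑ j, cf j • A j ∈ T := by
        refine AddMonoidHom.mem_ker.mpr ?_
        rw [map_sub, hWsum, hcf, sub_self]
      have hxe : x = (x - ∑ j, cf j • A j) + ∑ j, cf j • A j := (sub_add_cancel _ _).symm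
      rw [hxe]
      exact add_mem ((le_sup_left : T ≤ T ⊔ K) hxT) ((le_sup_right : K ≤ T ⊔ K) hκK)
    · refine sup_le ?_ ?_
      · intro x hx
        rw [AddSubgroup.mem_comap]
        have hx0 : W x = 0 := AddMonoidHom.mem_ker.mp hx
        rw [hx0]
        exact zero_mem L
      · rw [hK]
        refine (AddSubgroup.closure_le _).mpr ?_
        rintro x ⟨j, rfl⟩
        rw [SetLike.mem_coe, AddSubgroup.mem_comap, hWA j, hLdef]
        exact AddSubgroup.subset_closure ⟨j, rfl⟩
  have hPcomap : P = AddSubgroup.comap W satL := by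
    rw [hPdef, hudef, hsatdef]
    exact (AddMonoidHom.comap_ker _ _).symm
  -- ### Cardinality of T
  have hcardT : Nat.card T = ∏ i, r i := by
    have e : T ≃ ((i : Fin k) → (w i).ker) :=
      { toFun := fun x i => ⟨x.1 i, AddMonoidHom.mem_ker.mpr
          (congrFun (AddMonoidHom.mem_ker.mp x.2) i)⟩
        invFun := fun y => ⟨fun i => (y i).1, AddMonoidHom.mem_ker.mpr
          (funext fun i => AddMonoidHom.mem_ker.mp (y i).2)⟩
        left_inv := fun x => rfl
        right_inv := fun y => rfl }
    rw [Nat.card_congr e, Nat.card_pi]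
    exact (Finset.prod_congr rfl fun i _ => (hr i).symm)
  -- ### relIndex K (T ⊔ K) = ∏ r
  have hstep3 : K.relIndex (T ⊔ K) = ∏ i, r i := by
    rw [AddSubgroup.relIndex_sup_right, ← AddSubgroup.inf_relIndex_right, hKTbot,
      AddSubgroup.relIndex_bot_left, hcardT]
  -- ### The map ψ and the index of L ⊔ E0
  set nn : {j : Fin k // j ≠ i0} → ℕ := fun j => (q j.1).toNat with hnndef
  have hnncast : ∀ j, ((nn j : ℤ)) = q j.1 := fun j => Int.toNat_of_nonneg (hqpos j.1).le
  set ψ : (Fin k → ℤ) →+ ((j : {j : Fin k // j ≠ i0}) → ZMod (nn j)) :=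
    { toFun := fun x j => ((x j.1 : ℤ) : ZMod (nn j))
      map_zero' := by funext j; simp
      map_add' := fun a b => by funext j; simp } with hψdef
  have hψapp : ∀ (x : Fin k → ℤ) (j : {j : Fin k // j ≠ i0}),
      ψ x j = ((x j.1 : ℤ) : ZMod (nn j)) := fun x j => rfl
  have hψsurj : Function.Surjective ψ := by
    intro y
    refine ⟨fun i => if hi : i = i0 then 0
      else Classical.choose (ZMod.intCast_surjective (n := nn ⟨i, hi⟩) (y ⟨i, hi⟩)), ?_⟩
    funext j
    rw [hψapp, dif_neg j.2]
    exact Classical.choose_spec (ZMod.intCast_surjective (y ⟨j.1, j.2⟩))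
  have hkerψ : ψ.ker = L ⊔ E0 := by
    apply le_antisymm
    · intro x hx
      have hdvd : ∀ j : {j : Fin k // j ≠ i0}, q j.1 ∣ x j.1 := by
        intro j
        have h1 := congrFun (AddMonoidHom.mem_ker.mp hx) j
        rw [hψapp] at h1
        rw [← hnncast j]
        exact (ZMod.intCast_zmod_eq_zero_iff_dvd _ _).mp h1
      have hdec : x = (x i0) • Pi.single i0 (1:ℤ)
          + ∑ j : {j : Fin k // j ≠ i0}, (x j.1 / q j.1) • Pi.single j.1 (q j.1) := by
        funext i
        rcases eq_or_ne i i0 with rfl | hi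
        · rw [Pi.add_apply, Pi.smul_apply, Pi.single_eq_same, Finset.sum_apply,
            Finset.sum_eq_zero (fun j _ => by
              rw [Pi.smul_apply, Pi.single_eq_of_ne (Ne.symm j.2), smul_zero]),
            add_zero, smul_eq_mul, mul_one]
        · rw [Pi.add_apply, Pi.smul_apply, Pi.single_eq_of_ne hi, smul_zero, zero_add,
            Finset.sum_apply,
            Finset.sum_eq_single (⟨i, hi⟩ : {j : Fin k // j ≠ i0}) (fun j _ hj => by
              rw [Pi.smul_apply,
                Pi.single_eq_of_ne (fun e => hj (Subtype.ext e.symm)), smul_zero]) (by simp),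
            Pi.smul_apply, Pi.single_eq_same, smul_eq_mul,
            Int.ediv_mul_cancel (hdvd ⟨i, hi⟩)]
      rw [hdec]
      refine add_mem ((le_sup_right : E0 ≤ L ⊔ E0) ?_) (AddSubgroup.sum_mem _ fun j _ => ?_)
      · refine AddSubgroup.zsmul_mem _ ?_ _
        rw [hE0def]
        exact AddSubgroup.mem_zmultiples _
      · have hsingle : Pi.single j.1 (q j.1) = (q i0) • Pi.single i0 (1:ℤ) - v j := by
          simp only [hvdef]
          have h2 : (q i0) • (Pi.single i0 (1:ℤ) : Fin k → ℤ) = Pi.single i0 (q i0) := by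
            funext i
            rcases eq_or_ne i i0 with rfl | hi
            · rw [Pi.smul_apply, Pi.single_eq_same, Pi.single_eq_same, smul_eq_mul, mul_one]
            · rw [Pi.smul_apply, Pi.single_eq_of_ne hi, Pi.single_eq_of_ne hi, smul_zero]
          rw [h2, sub_sub_cancel]
        refine AddSubgroup.zsmul_mem _ ?_ _
        rw [hsingle]
        refine sub_mem ((le_sup_right : E0 ≤ L ⊔ E0) ?_) ((le_sup_left : L ≤ L ⊔ E0) ?_)
        · refine AddSubgroup.zsmul_mem _ ?_ _
          rw [hE0def]
          exact AddSubgroup.mem_zmultiples _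
        · rw [hLdef]
          exact AddSubgroup.subset_closure ⟨j, rfl⟩
    · refine sup_le ?_ ?_
      · rw [hLdef]
        refine (AddSubgroup.closure_le _).mpr ?_
        rintro x ⟨j, rfl⟩
        refine AddMonoidHom.mem_ker.mpr ?_
        funext j'
        rw [hψapp]
        rw [Pi.zero_apply, ZMod.intCast_zmod_eq_zero_iff_dvd, hnncast j']
        simp only [hvdef, Pi.sub_apply]
        rw [Pi.single_eq_of_ne j'.2, Pi.single_apply, zero_sub]
        rcases eq_or_ne j'.1 j.1 with e | e
        · rw [if_pos e]
          exact (dvd_neg).mpr (by rw [e])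
        · rw [if_neg e, neg_zero]
          exact dvd_zero _
      · intro x hx
        rw [hE0def] at hx
        obtain ⟨t, rfl⟩ := AddSubgroup.mem_zmultiples_iff.mp hx
        refine AddMonoidHom.mem_ker.mpr ?_
        funext j
        rw [hψapp]
        rw [Pi.zero_apply, Pi.smul_apply, Pi.single_eq_of_ne j.2, smul_zero, Int.cast_zero]
  have hindexLE : (L ⊔ E0).index = (Qp i0).natAbs := by
    have h1 : ((∏ j, nn j : ℕ) : ℤ) = Qp i0 := by
      push_cast
      rw [Finset.prod_congr rfl fun j _ => hnncast j, hQp]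
      exact (Finset.prod_subtype _ (fun x => by simp) q).symm
    rw [← hkerψ, AddSubgroup.index_ker, AddMonoidHom.range_eq_top.mpr hψsurj]
    rw [Nat.card_congr AddSubgroup.topEquiv.toEquiv, Nat.card_pi]
    rw [Finset.prod_congr rfl fun j _ => Nat.card_zmod (nn j)]
    have h2 := congrArg Int.natAbs h1
    rwa [Int.natAbs_natCast] at h2
  -- ### satL ⊔ E0 and its index
  have hcsurj : Function.Surjective (cmap c) := cmap_surjective hgcdc
  have hsatsup : satL ⊔ E0 = AddSubgroup.comap (cmap c) (AddSubgroup.zmultiples (c i0)) := by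
    apply le_antisymm
    · refine sup_le ?_ ?_
      · intro x hx
        rw [AddSubgroup.mem_comap]
        have hx0 : cmap c x = 0 := AddMonoidHom.mem_ker.mp hx
        rw [hx0]
        exact zero_mem _
      · intro x hx
        rw [hE0def] at hx
        obtain ⟨t, rfl⟩ := AddSubgroup.mem_zmultiples_iff.mp hx
        rw [AddSubgroup.mem_comap, map_zsmul, cmap_single, mul_one]
        exact AddSubgroup.zsmul_mem _ (AddSubgroup.mem_zmultiples _) t
    · intro x hx
      rw [AddSubgroup.mem_comap] at hx
      obtain ⟨t, ht⟩ := AddSubgroup.mem_zmultiples_iff.mp hx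
      have hmem : x - t • Pi.single i0 (1:ℤ) ∈ satL := by
        refine AddMonoidHom.mem_ker.mpr ?_
        rw [map_sub, map_zsmul, cmap_single, mul_one, ht, sub_self]
      have hxe : x = (x - t • Pi.single i0 (1:ℤ)) + t • Pi.single i0 (1:ℤ) :=
        (sub_add_cancel _ _).symm
      rw [hxe]
      refine add_mem ((le_sup_left : satL ≤ satL ⊔ E0) hmem)
        ((le_sup_right : E0 ≤ satL ⊔ E0) ?_)
      refine AddSubgroup.zsmul_mem _ ?_ _
      rw [hE0def]
      exact AddSubgroup.mem_zmultiples _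
  have hindexSE : (satL ⊔ E0).index = (c i0).natAbs := by
    rw [hsatsup, AddSubgroup.index_comap_of_surjective _ hcsurj, Int.index_zmultiples]
  -- ### (L ⊔ E0) ⊓ satL = L
  have hinf : (L ⊔ E0) ⊓ satL = L := by
    apply le_antisymm
    · rintro x ⟨hx1, hx2⟩
      obtain ⟨l, hl, e, he, rfl⟩ := AddSubgroup.mem_sup.mp hx1
      rw [hE0def] at he
      obtain ⟨t, rfl⟩ := AddSubgroup.mem_zmultiples_iff.mp he
      have hl0 : cmap c l = 0 := AddMonoidHom.mem_ker.mp (hLle hl)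
      have hx0 : cmap c (l + t • Pi.single i0 (1:ℤ)) = 0 := AddMonoidHom.mem_ker.mp hx2
      rw [map_add, hl0, zero_add, map_zsmul, cmap_single, mul_one, smul_eq_mul] at hx0
      have ht : t = 0 := by
        rcases mul_eq_zero.mp hx0 with h2 | h2
        · exact h2
        · exact absurd h2 (hcpos i0).ne'
      rw [ht, zero_smul, add_zero]
      exact hl
    · exact le_inf le_sup_left hLle
  -- ### relIndex L satL = h.natAbs
  have hLsat : L.relIndex satL = h.natAbs := by
    have hle : L ⊔ E0 ≤ satL ⊔ E0 := sup_le_sup_right hLle E0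
    have hmul := AddSubgroup.relIndex_mul_index hle
    rw [hindexLE, hindexSE] at hmul
    have hrel : (L ⊔ E0).relIndex (satL ⊔ E0) = L.relIndex satL := by
      have h1 : satL ⊔ (L ⊔ E0) = satL ⊔ E0 := by rw [← sup_assoc, sup_of_le_left hLle]
      rw [← h1, AddSubgroup.relIndex_sup_right, ← AddSubgroup.inf_relIndex_right, hinf]
    rw [hrel] at hmul
    have hQabs : (Qp i0).natAbs = h.natAbs * (c i0).natAbs := by
      rw [← hc i0, Int.natAbs_mul]
    rw [hQabs] at hmul
    exact Nat.eq_of_mul_eq_mul_right (Int.natAbs_pos.mpr (hcpos i0).ne') hmul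
  -- ### Assembling the cardinality
  have hcard : K.relIndex P = (∏ i, r i) * h.natAbs := by
    rw [← AddSubgroup.relIndex_mul_relIndex K (T ⊔ K) P le_sup_right (sup_le hTP hKP), hstep3]
    congr 1
    rw [← hWK, hPcomap, AddSubgroup.relIndex_comap,
      AddSubgroup.map_comap_eq_self_of_surjective hWsurj]
    exact hLsat
  set S : AddSubgroup (((i : Fin k) → G i) ⧸ K) := P.map (QuotientAddGroup.mk' K) with hSdef
  have hcardS : Nat.card S = (∏ i, r i) * h.natAbs := by
    rw [hSdef, ← AddSubgroup.relIndex_ker, QuotientAddGroup.ker_mk']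
    exact hcard
  have hprodr_ne : (∏ i, r i) ≠ 0 := by
    refine Finset.prod_ne_zero_iff.mpr fun i _ => ?_
    rw [hr i]
    have h1 : Nonempty ((w i).ker) := ⟨0⟩
    have h2 := hfin i
    exact Nat.card_ne_zero.mpr ⟨h1, h2⟩
  have hSne : Nat.card S ≠ 0 := by
    rw [hcardS]
    exact Nat.mul_ne_zero hprodr_ne (Int.natAbs_ne_zero.mpr hhne)
  have hSfin : Finite S := (Nat.card_ne_zero.mp hSne).2
  -- ### The torsion subgroup is S
  have hTor : AddCommGroup.torsion (((i : Fin k) → G i) ⧸ K) = S := by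
    ext x
    rw [AddCommGroup.mem_torsion]
    constructor
    · intro hx
      obtain ⟨y, rfl⟩ := QuotientAddGroup.mk'_surjective K x
      obtain ⟨nx, hnpos, hnx⟩ := isOfFinAddOrder_iff_nsmul_eq_zero.mp hx
      have h1 : (QuotientAddGroup.mk' K) (nx • y) = 0 := by rw [map_nsmul, hnx]
      have h2 : nx • y ∈ K := by
        rw [QuotientAddGroup.mk'_apply] at h1
        exact (QuotientAddGroup.eq_zero_iff _).mp h1
      have h3 : u (nx • y) = 0 := AddMonoidHom.mem_ker.mp (hKP h2)
      have h4 : u y = 0 := by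
        rw [map_nsmul, nsmul_eq_mul] at h3
        exact (mul_eq_zero.mp h3).resolve_left (Nat.cast_ne_zero.mpr hnpos.ne')
      exact ⟨y, AddMonoidHom.mem_ker.mpr h4, rfl⟩
    · intro hx
      have h1 : IsOfFinAddOrder (⟨x, hx⟩ : S) := isOfFinAddOrder_of_finite _
      have h2 := S.subtype.isOfFinAddOrder h1
      exact h2
  refine ⟨hlin, ?_, ?_⟩
  · rw [hTor]; exact hSfin
  · rw [hTor, hcardS, Nat.cast_mul, Nat.cast_prod, Int.natAbs_of_nonneg hhnonneg]
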